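/- Fix positive reals l_i⁰, l_j⁰, l_k⁰. For conformal factors (u_i, u_j, u_k) define deformed edge lengths l_i = e^{u_j+u_k} l_i⁰, l_j = e^{u_i+u_k} l_j⁰, l_k = e^{u_i+u_j} l_k⁰, and suppose these satisfy the strict triangle inequality, with angles θ_i, θ_j, θ_k given by the cosine law. Then ∂θ_i/∂u_j = cot θ_k. -/

import Mathlib

noncomputable def angOpp (a b c : ℝ) : ℝ := Real.arccos ((b ^ 2 + c ^ 2 - a ^ 2) / (2 * b * c))

lemma yamabe_key (li lj lk : ℝ) (hli : 0 < li) (hlj : 0 < lj) (hlk : 0 < lk)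
    (h1 : li + lj > lk) (h2 : lj + lk > li) (h3 : lk + li > lj)
    (f : ℝ → ℝ) (x : ℝ)
    (hf : HasDerivAt f ((lk ^ 2 - li ^ 2 - lj ^ 2) / (2 * lj * lk)) x)
    (hfx : f x = (lj ^ 2 + lk ^ 2 - li ^ 2) / (2 * lj * lk)) :
    HasDerivAt (fun t => Real.arccos (f t))
      (Real.cos (angOpp lk li lj) / Real.sin (angOpp lk li lj)) x := by
  set xi : ℝ := (lj ^ 2 + lk ^ 2 - li ^ 2) / (2 * lj * lk) with hxidef
  set xk : ℝ := (li ^ 2 + lj ^ 2 - lk ^ 2) / (2 * li * lj) with hxkdef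
  have hprod : 0 < (li + lj - lk) * (lj + lk - li) * ((lk + li - lj) * (li + lj + lk)) := by
    apply mul_pos (mul_pos (by linarith) (by linarith)) (mul_pos (by linarith) (by linarith))
  have hSi : 0 < 1 - xi ^ 2 := by
    rw [hxidef, div_pow, sub_pos]
    rw [div_lt_one (by positivity)]
    nlinarith [hprod]
  have hSk : 0 < 1 - xk ^ 2 := by
    rw [hxkdef, div_pow, sub_pos]
    rw [div_lt_one (by positivity)]
    nlinarith [hprod]
  have hxi1 : xi ≠ -1 := by nlinarith [hSi]
  have hxi2 : xi ≠ 1 := by nlinarith [hSi]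
  have hk1 : -1 ≤ xk := by nlinarith [hSk]
  have hk2 : xk ≤ 1 := by nlinarith [hSk]
  have hsi : 0 < Real.sqrt (1 - xi ^ 2) := Real.sqrt_pos.2 hSi
  have hsk : 0 < Real.sqrt (1 - xk ^ 2) := Real.sqrt_pos.2 hSk
  -- law of sines
  have hs : Real.sqrt (1 - xi ^ 2) * lk = Real.sqrt (1 - xk ^ 2) * li := by
    rw [← Real.sqrt_sq hlk.le, ← Real.sqrt_sq hli.le, ← Real.sqrt_mul hSi.le,
      ← Real.sqrt_mul hSk.le]
    congr 1
    rw [hxidef, hxkdef]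
    field_simp
    ring
  have h1' : f x ≠ -1 := by rw [hfx]; exact hxi1
  have h2' : f x ≠ 1 := by rw [hfx]; exact hxi2
  have hA := (Real.hasDerivAt_arccos h1' h2').comp x hf
  rw [hfx] at hA
  have hval : -(1 / Real.sqrt (1 - xi ^ 2)) * ((lk ^ 2 - li ^ 2 - lj ^ 2) / (2 * lj * lk))
      = Real.cos (angOpp lk li lj) / Real.sin (angOpp lk li lj) := by
    unfold angOpp
    rw [Real.cos_arccos hk1 hk2, Real.sin_arccos]
    have hsk' : Real.sqrt (1 - ((li ^ 2 + lj ^ 2 - lk ^ 2) / (2 * li * lj)) ^ 2)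
        = Real.sqrt (1 - xi ^ 2) * lk / li := by
      rw [eq_div_iff hli.ne']
      rw [← hxkdef] at *
      linarith [hs]
    rw [hsk', hxkdef]
    field_simp
    ring
  rw [← hval]
  exact hA

/-- Euclidean discrete conformal deformation: `∂θ_i/∂u_j = cot θ_k`. -/
theorem yamabe_dtheta_i_du_j
    (li0 lj0 lk0 : ℝ) (hli0 : 0 < li0) (hlj0 : 0 < lj0) (hlk0 : 0 < lk0)
    (ui uj uk : ℝ)
    (li lj lk : ℝ)
    (hli : li = Real.exp (uj + uk) * li0)
    (hlj : lj = Real.exp (ui + uk) * lj0)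
    (hlk : lk = Real.exp (ui + uj) * lk0)
    (h1 : li + lj > lk) (h2 : lj + lk > li) (h3 : lk + li > lj) :
    HasDerivAt
      (fun t : ℝ => angOpp (Real.exp (t + uk) * li0) (Real.exp (ui + uk) * lj0)
        (Real.exp (ui + t) * lk0))
      (Real.cos (angOpp lk li lj) / Real.sin (angOpp lk li lj)) uj := by
  have hlip : 0 < li := by rw [hli]; positivity
  have hljp : 0 < lj := by rw [hlj]; positivity
  have hlkp : 0 < lk := by rw [hlk]; positivity
  rw [← hlj]
  have hc : HasDerivAt (fun t => Real.exp (ui + t) * lk0) lk uj := by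
    have h := (((hasDerivAt_id uj).const_add ui).exp).mul_const lk0
    simpa [← hlk] using h
  have ha : HasDerivAt (fun t => Real.exp (t + uk) * li0) li uj := by
    have h := (((hasDerivAt_id uj).add_const uk).exp).mul_const li0
    simpa [← hli] using h
  have hc2 : HasDerivAt (fun t => (Real.exp (ui + t) * lk0) ^ 2) (2 * lk * lk) uj := by
    have h := hc.pow 2
    norm_num at h
    simpa [← hlk, mul_assoc, Pi.pow_def] using h
  have ha2 : HasDerivAt (fun t => (Real.exp (t + uk) * li0) ^ 2) (2 * li * li) uj := by
    have h := ha.pow 2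
    norm_num at h
    simpa [← hli, mul_assoc, Pi.pow_def] using h
  have hN : HasDerivAt (fun t => lj ^ 2 + (Real.exp (ui + t) * lk0) ^ 2
      - (Real.exp (t + uk) * li0) ^ 2) (2 * lk * lk - 2 * li * li) uj := by
    simpa [Pi.add_def, Pi.sub_def] using ((hasDerivAt_const uj (lj ^ 2)).add hc2).sub ha2
  have hM : HasDerivAt (fun t => 2 * lj * (Real.exp (ui + t) * lk0)) (2 * lj * lk) uj :=
    hc.const_mul (2 * lj)
  have hMne : 2 * lj * (Real.exp (ui + uj) * lk0) ≠ 0 := by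
    rw [← hlk]; positivity
  have hq := hN.div hM hMne
  have hq2 : HasDerivAt (fun t => (lj ^ 2 + (Real.exp (ui + t) * lk0) ^ 2
      - (Real.exp (t + uk) * li0) ^ 2) / (2 * lj * (Real.exp (ui + t) * lk0)))
      ((lk ^ 2 - li ^ 2 - lj ^ 2) / (2 * lj * lk)) uj := by
    have heq : ((2 * lk * lk - 2 * li * li) * (2 * lj * (Real.exp (ui + uj) * lk0))
        - (lj ^ 2 + (Real.exp (ui + uj) * lk0) ^ 2 - (Real.exp (uj + uk) * li0) ^ 2)
          * (2 * lj * lk)) / (2 * lj * (Real.exp (ui + uj) * lk0)) ^ 2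
        = (lk ^ 2 - li ^ 2 - lj ^ 2) / (2 * lj * lk) := by
      rw [← hlk, ← hli]
      field_simp
      ring
    rw [← heq]
    exact hq
  have hfx : (fun t => (lj ^ 2 + (Real.exp (ui + t) * lk0) ^ 2
      - (Real.exp (t + uk) * li0) ^ 2) / (2 * lj * (Real.exp (ui + t) * lk0))) uj
      = (lj ^ 2 + lk ^ 2 - li ^ 2) / (2 * lj * lk) := by
    simp only
    rw [← hlk, ← hli]
  exact yamabe_key li lj lk hlip hljp hlkp h1 h2 h3 _ uj hq2 hfx
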